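/- Let n ≥ 1 be an integer, let f(z) = Σ_α a_α z^α be holomorphic on the unit polydisk 𝔻ⁿ with |f(z)| ≤ 1 there, and let P_m(z) = Σ_{|α|=m} a_α z^α denote its homogeneous part of degree m. Then for every k = 0, 1, 2, … and every z ∈ 𝔻ⁿ: |a_0|² + |P_1(z)|² + … + |P_k(z)|² + |P_{2k+1}(z)| ≤ 1; and for every k = 1, 2, …: |a_0|² + |P_1(z)|² + … + |P_{k−1}(z)|² + |P_k(z)|²/(1+|a_0|) + |P_{2k}(z)| ≤ 1, where a_0 = a_{(0,…,0)} = f(0). -/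

import Mathlib

open Finset Complex ComplexConjugate

set_option maxHeartbeats 1000000

lemma root_sum_int (N : ℕ) (d : ℤ) (hd0 : d ≠ 0) (hdN : d.natAbs < N) :
    ∑ j ∈ range N, (Complex.exp (2 * Real.pi * I * d / N)) ^ j = 0 := by
  have hNpos : 0 < N := lt_of_le_of_lt (Nat.zero_le _) hdN
  have hN : (N : ℂ) ≠ 0 := by exact_mod_cast hNpos.ne'
  have h2pi : (2 * (Real.pi : ℂ) * I) ≠ 0 := by
    simp [Real.pi_ne_zero, I_ne_zero, Complex.ofReal_ne_zero]
  set ζ : ℂ := Complex.exp (2 * Real.pi * I * d / N) with hζ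
  have hζ1 : ζ ≠ 1 := by
    rw [hζ, Ne, Complex.exp_eq_one_iff]
    rintro ⟨n, hn⟩
    have hdn : (d : ℂ) = n * N := by
      have h1 : 2 * (Real.pi:ℂ) * I * d = 2 * (Real.pi:ℂ) * I * (n * N) := by
        field_simp at hn
        linear_combination (2 * (Real.pi:ℂ) * I) * hn
      have := mul_left_cancel₀ h2pi h1
      exact this
    have hdint : d = n * N := by exact_mod_cast hdn
    rcases eq_or_ne n 0 with rfl | hn0
    · simp at hdint; exact hd0 hdint
    · have h1 : (1 : ℤ) ≤ |n| := Int.one_le_abs (by exact_mod_cast hn0)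
      have : (N : ℤ) ≤ |d| := by
        rw [hdint, abs_mul, Int.abs_natCast]
        nlinarith [Int.natCast_nonneg N]
      rw [Int.abs_eq_natAbs] at this
      omega
  have hζN : ζ ^ N = 1 := by
    rw [hζ, ← Complex.exp_nat_mul]
    have : (N : ℂ) * (2 * Real.pi * I * d / N) = (d : ℂ) * (2 * Real.pi * I) := by
      field_simp
    rw [this, Complex.exp_int_mul_two_pi_mul_I]
  rw [geom_sum_eq hζ1, hζN, sub_self, zero_div]

lemma power_sum (q : Polynomial ℂ) (N : ℕ) (hN : q.natDegree < N) (r : ℝ) :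
    ∑ j ∈ range N, ‖q.eval ((r:ℂ) * Complex.exp (2*Real.pi*I*j/N))‖^2
      = N * ∑ M ∈ range N, ‖q.coeff M‖^2 * r^(2*M) := by
  have hNpos : 0 < N := lt_of_le_of_lt (Nat.zero_le _) hN
  have hNC : (N : ℂ) ≠ 0 := by exact_mod_cast hNpos.ne'
  apply Complex.ofReal_injective
  push_cast
  have cast1 : ∀ z : ℂ, ((‖z‖:ℂ))^2 = z * conj z := by
    intro z
    rw [Complex.mul_conj]
    norm_cast
    rw [Complex.normSq_eq_norm_sq]
  calc ∑ j ∈ range N, ((‖q.eval ((r:ℂ) * Complex.exp (2*Real.pi*I*j/N))‖ : ℂ))^2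
      = ∑ j ∈ range N, ∑ M ∈ range N, ∑ M' ∈ range N,
          (q.coeff M * conj (q.coeff M') * (r:ℂ)^M * (r:ℂ)^M') *
            (Complex.exp (2*Real.pi*I*((M:ℂ) - M')/N))^j := by
        refine Finset.sum_congr rfl fun j _ => ?_
        rw [cast1]
        rw [Polynomial.eval_eq_sum_range' hN]
        simp only [map_sum, map_mul]
        rw [Finset.sum_mul_sum]
        refine Finset.sum_congr rfl fun M _ => Finset.sum_congr rfl fun M' _ => ?_
        have hconj_exp : conj (Complex.exp (2*Real.pi*I*j/N)) = Complex.exp (-(2*Real.pi*I*j/N)) := by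
          rw [← Complex.exp_conj]
          congr 1
          simp only [map_div₀, map_mul, map_ofNat, Complex.conj_ofReal, Complex.conj_I,
            map_natCast]
          ring
        have hterm : ((r:ℂ) * Complex.exp (2*Real.pi*I*j/N))^M
            * conj (((r:ℂ) * Complex.exp (2*Real.pi*I*j/N))^M')
            = ((r:ℂ)^M * (r:ℂ)^M') * (Complex.exp (2*Real.pi*I*((M:ℂ) - M')/N))^j := by
          rw [map_pow, map_mul, Complex.conj_ofReal, hconj_exp, mul_pow, mul_pow,
            ← Complex.exp_nat_mul, ← Complex.exp_nat_mul]
          rw [mul_mul_mul_comm, ← Complex.exp_add]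
          have harg : (M:ℂ) * (2*Real.pi*I*j/N) + (M':ℂ) * -(2*Real.pi*I*j/N)
              = (j:ℂ) * (2*Real.pi*I*((M:ℂ) - M')/N) := by ring
          rw [harg, Complex.exp_nat_mul]
        calc q.coeff M * ((r:ℂ) * Complex.exp (2*Real.pi*I*j/N))^M
              * (conj (q.coeff M') * conj (((r:ℂ) * Complex.exp (2*Real.pi*I*j/N))^M'))
            = (q.coeff M * conj (q.coeff M')) * (((r:ℂ) * Complex.exp (2*Real.pi*I*j/N))^M
              * conj (((r:ℂ) * Complex.exp (2*Real.pi*I*j/N))^M')) := by ring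
          _ = q.coeff M * conj (q.coeff M') * (r:ℂ)^M * (r:ℂ)^M'
              * (Complex.exp (2*Real.pi*I*((M:ℂ) - M')/N))^j := by rw [hterm]; ring
    _ = ∑ M ∈ range N, ∑ M' ∈ range N,
          (q.coeff M * conj (q.coeff M') * (r:ℂ)^M * (r:ℂ)^M') *
            ∑ j ∈ range N, (Complex.exp (2*Real.pi*I*((M:ℂ) - M')/N))^j := by
        rw [Finset.sum_comm]
        refine Finset.sum_congr rfl fun M _ => ?_
        rw [Finset.sum_comm]
        refine Finset.sum_congr rfl fun M' _ => ?_
        rw [Finset.mul_sum]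
    _ = ∑ M ∈ range N, (q.coeff M * conj (q.coeff M) * (r:ℂ)^M * (r:ℂ)^M) * N := by
        refine Finset.sum_congr rfl fun M hM => ?_
        rw [Finset.sum_eq_single M]
        · have : ((M:ℂ) - M) = 0 := sub_self _
          rw [this]
          simp
        · intro M' hM' hne
          have hz : ∑ j ∈ range N, (Complex.exp (2*Real.pi*I*((M:ℂ) - M')/N))^j = 0 := by
            have hd0 : ((M:ℤ) - M') ≠ 0 := by
              intro h
              apply hne
              omega
            have hdN : ((M:ℤ) - M').natAbs < N := by
              have h1 := Finset.mem_range.mp hM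
              have h2 := Finset.mem_range.mp hM'
              omega
            have := root_sum_int N ((M:ℤ) - M') hd0 hdN
            convert this using 3
            push_cast
            ring
          rw [hz, mul_zero]
        · intro h; exact absurd hM h
    _ = (N:ℂ) * ∑ M ∈ range N, ((‖q.coeff M‖:ℂ))^2 * ((r:ℂ))^(2*M) := by
        rw [Finset.mul_sum]
        refine Finset.sum_congr rfl fun M _ => ?_
        rw [cast1]
        ring

lemma master (c : ℕ → ℂ)
    (hc : ∀ t : ℂ, ‖t‖ < 1 → ∃ s, ‖s‖ ≤ 1 ∧ HasSum (fun m => c m * t ^ m) s)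
    (w : ℕ → ℂ) (K : ℕ) (hw : ∀ j, K < j → w j = 0) (E : Finset ℕ)
    (r : ℝ) (hr0 : 0 < r) (hr1 : r < 1) :
    ∑ m ∈ E, ‖∑ j ∈ range (m+1), c j * w (m-j)‖^2 * r^(2*m)
      ≤ ∑ j ∈ range (K+1), ‖w j‖^2 * r^(2*j) := by
  -- absolute summability of the coefficient series at radius r
  have hsum : Summable (fun M => ‖c M‖ * r^M) := by
    set ρ : ℝ := (1+r)/2 with hρ
    have hρ0 : 0 < ρ := by positivity
    have hρ1 : ρ < 1 := by rw [hρ]; linarith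
    have hrρ : r < ρ := by rw [hρ]; linarith
    obtain ⟨s, -, hs⟩ := hc (ρ : ℂ) (by
      rw [Complex.norm_real, Real.norm_eq_abs, abs_of_pos hρ0]; exact hρ1)
    have hterm : Filter.Tendsto (fun M => ‖c M * (ρ:ℂ)^M‖) Filter.atTop (nhds 0) := by
      have := hs.summable.tendsto_atTop_zero
      exact (tendsto_zero_iff_norm_tendsto_zero.mp this)
    obtain ⟨C, hC⟩ := hterm.bddAbove_range
    have hCb : ∀ M, ‖c M‖ * ρ^M ≤ C := by
      intro M
      have : ‖c M * (ρ:ℂ)^M‖ ∈ Set.range fun M => ‖c M * (ρ:ℂ)^M‖ := ⟨M, rfl⟩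
      have h2 := hC this
      rwa [norm_mul, norm_pow, Complex.norm_real, Real.norm_eq_abs, abs_of_pos hρ0] at h2
    have hgeo : Summable (fun M : ℕ => C * (r/ρ)^M) := by
      apply Summable.mul_left
      apply summable_geometric_of_lt_one (by positivity)
      rw [div_lt_one hρ0]; exact hrρ
    apply Summable.of_nonneg_of_le (fun M => by positivity) (fun M => ?_) hgeo
    have h2 : (0:ℝ) ≤ (r/ρ)^M := by positivity
    have h3 : ρ^M * (r/ρ)^M = r^M := by
      rw [← mul_pow]
      congr 1
      field_simp
    calc ‖c M‖ * r^M = (‖c M‖ * ρ^M) * (r/ρ)^M := by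
          rw [mul_assoc, h3]
      _ ≤ C * (r/ρ)^M := mul_le_mul_of_nonneg_right (hCb M) h2
  set ε : ℕ → ℝ := fun T => ∑' M, ‖c (M+T)‖ * r^(M+T) with hε
  have hεnn : ∀ T, 0 ≤ ε T := by
    intro T
    apply tsum_nonneg
    intro M; positivity
  have hε0 : Filter.Tendsto ε Filter.atTop (nhds 0) :=
    tendsto_sum_nat_add (fun M => ‖c M‖ * r^M)
  -- the polynomial p
  set p : Polynomial ℂ := ∑ j ∈ range (K+1), Polynomial.C (w j) * Polynomial.X ^ j with hp
  have hpcoeff : ∀ i, p.coeff i = w i := by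
    intro i
    rw [hp, Polynomial.finset_sum_coeff]
    simp only [Polynomial.coeff_C_mul, Polynomial.coeff_X_pow, mul_ite, mul_one, mul_zero]
    rcases lt_or_ge i (K+1) with h | h
    · rw [Finset.sum_eq_single i]
      · simp
      · intro b _ hne; simp [Ne.symm hne]
      · intro h2; exact absurd (Finset.mem_range.mpr h) h2
    · rw [Finset.sum_eq_zero, hw i (by omega)]
      intro b hb
      rw [if_neg]
      have := Finset.mem_range.mp hb
      omega
  have hpdeg : p.natDegree ≤ K := by
    apply Polynomial.natDegree_le_iff_coeff_eq_zero.mpr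
    intro M hM
    rw [hpcoeff]; exact hw M hM
  -- the key estimate for every sufficiently large truncation T
  have key : ∀ T, (∀ m ∈ E, m < T) →
      ∑ m ∈ E, ‖∑ j ∈ range (m+1), c j * w (m-j)‖^2 * r^(2*m)
        ≤ (1 + ε T)^2 * ∑ j ∈ range (K+1), ‖w j‖^2 * r^(2*j) := by
    intro T hT
    set gT : Polynomial ℂ := ∑ M ∈ range T, Polynomial.C (c M) * Polynomial.X ^ M with hgT
    have hgcoeff : ∀ i, gT.coeff i = if i < T then c i else 0 := by
      intro i
      rw [hgT, Polynomial.finset_sum_coeff]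
      simp only [Polynomial.coeff_C_mul, Polynomial.coeff_X_pow, mul_ite, mul_one, mul_zero]
      rcases lt_or_ge i T with h | h
      · rw [Finset.sum_eq_single i]
        · simp [h]
        · intro b _ hne; simp [Ne.symm hne]
        · intro h2; exact absurd (Finset.mem_range.mpr h) h2
      · rw [Finset.sum_eq_zero, if_neg (by omega)]
        intro b hb
        rw [if_neg]
        have := Finset.mem_range.mp hb
        omega
    have hgdeg : gT.natDegree ≤ T := by
      apply Polynomial.natDegree_le_iff_coeff_eq_zero.mpr
      intro M hM
      rw [hgcoeff, if_neg (by omega)]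
    set q : Polynomial ℂ := gT * p with hq
    set N : ℕ := T + K + 1 with hN
    have hqdeg : q.natDegree < N := by
      calc q.natDegree ≤ gT.natDegree + p.natDegree := Polynomial.natDegree_mul_le
        _ ≤ T + K := by omega
        _ < N := by omega
    have hqcoeff : ∀ m, m < T → q.coeff m = ∑ j ∈ range (m+1), c j * w (m-j) := by
      intro m hm
      rw [hq, Polynomial.coeff_mul, Finset.Nat.sum_antidiagonal_eq_sum_range_succ_mk]
      refine Finset.sum_congr rfl fun j hj => ?_
      have hj' : j ≤ m := by have := Finset.mem_range.mp hj; omega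
      rw [hgcoeff, if_pos (by omega), hpcoeff]
    -- pointwise bound on the circle of radius r
    have hpt : ∀ t : ℂ, ‖t‖ = r → ‖q.eval t‖ ≤ (1 + ε T) * ‖p.eval t‖ := by
      intro t ht
      obtain ⟨s, hs1, hs2⟩ := hc t (by rw [ht]; exact hr1)
      have hgval : gT.eval t = ∑ M ∈ range T, c M * t^M := by
        rw [hgT, Polynomial.eval_finset_sum]
        simp
      have htail : HasSum (fun M => c (M+T) * t^(M+T)) (s - ∑ M ∈ range T, c M * t^M) :=
        (hasSum_nat_add_iff' T).mpr hs2
      have hgb : ‖gT.eval t‖ ≤ 1 + ε T := by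
        have h1 : ‖s - gT.eval t‖ ≤ ε T := by
          rw [hgval, ← htail.tsum_eq]
          refine le_trans (norm_tsum_le_tsum_norm ?_) ?_
          · apply Summable.congr ((summable_nat_add_iff T).mpr hsum)
            intro M
            rw [norm_mul, norm_pow, ht]
          · rw [hε]
            apply le_of_eq
            apply tsum_congr
            intro M
            rw [norm_mul, norm_pow, ht]
        have hrw : gT.eval t = s - (s - gT.eval t) := by ring
        rw [hrw]
        exact (norm_sub_le _ _).trans (add_le_add hs1 h1)
      calc ‖q.eval t‖ = ‖gT.eval t‖ * ‖p.eval t‖ := by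
            rw [hq, Polynomial.eval_mul, norm_mul]
        _ ≤ (1 + ε T) * ‖p.eval t‖ :=
            mul_le_mul_of_nonneg_right hgb (norm_nonneg _)
    -- combine with the power sums
    have hNpos : 0 < N := by omega
    have hNR : (0:ℝ) < (N:ℝ) := by exact_mod_cast hNpos
    have hsum_q : ∑ M ∈ range N, ‖q.coeff M‖^2 * r^(2*M)
        ≤ (1 + ε T)^2 * ∑ M ∈ range N, ‖p.coeff M‖^2 * r^(2*M) := by
      have hjj : ∑ j ∈ range N, ‖q.eval ((r:ℂ) * Complex.exp (2*Real.pi*I*j/N))‖^2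
          ≤ (1 + ε T)^2 * ∑ j ∈ range N, ‖p.eval ((r:ℂ) * Complex.exp (2*Real.pi*I*j/N))‖^2 := by
        rw [Finset.mul_sum]
        apply Finset.sum_le_sum
        intro j _
        have ht : ‖(r:ℂ) * Complex.exp (2*Real.pi*I*j/N)‖ = r := by
          have harg : 2*(Real.pi:ℂ)*I*j/N = ((2*Real.pi*j/N : ℝ) : ℂ) * I := by
            push_cast; ring
          rw [norm_mul, Complex.norm_real, Real.norm_eq_abs, abs_of_pos hr0, harg,
            Complex.norm_exp_ofReal_mul_I, mul_one]
        have h1 := hpt _ ht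
        have h2 : (0:ℝ) ≤ ‖p.eval ((r:ℂ) * Complex.exp (2*Real.pi*I*j/N))‖ := norm_nonneg _
        calc ‖q.eval ((r:ℂ) * Complex.exp (2*Real.pi*I*j/N))‖^2
            ≤ ((1 + ε T) * ‖p.eval ((r:ℂ) * Complex.exp (2*Real.pi*I*j/N))‖)^2 := by
              apply pow_le_pow_left₀ (norm_nonneg _) h1
          _ = (1 + ε T)^2 * ‖p.eval ((r:ℂ) * Complex.exp (2*Real.pi*I*j/N))‖^2 := by ring
      rw [power_sum q N hqdeg r, power_sum p N (by omega) r] at hjj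
      have h2 : (1 + ε T)^2 * ((N:ℝ) * ∑ M ∈ range N, ‖p.coeff M‖^2 * r^(2*M))
          = (N:ℝ) * ((1 + ε T)^2 * ∑ M ∈ range N, ‖p.coeff M‖^2 * r^(2*M)) := by ring
      rw [h2] at hjj
      exact le_of_mul_le_mul_left hjj hNR
    -- restrict LHS to E, extend RHS index set
    have hE : ∑ m ∈ E, ‖∑ j ∈ range (m+1), c j * w (m-j)‖^2 * r^(2*m)
        ≤ ∑ M ∈ range N, ‖q.coeff M‖^2 * r^(2*M) := by
      have hsub : E ⊆ range N := by
        intro m hm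
        exact Finset.mem_range.mpr (by have := hT m hm; omega)
      have : ∀ m ∈ E, ‖∑ j ∈ range (m+1), c j * w (m-j)‖^2 * r^(2*m)
          = ‖q.coeff m‖^2 * r^(2*m) := by
        intro m hm
        rw [hqcoeff m (hT m hm)]
      rw [Finset.sum_congr rfl this]
      apply Finset.sum_le_sum_of_subset_of_nonneg hsub
      intro m _ _
      positivity
    have hW : ∑ M ∈ range N, ‖p.coeff M‖^2 * r^(2*M)
        = ∑ j ∈ range (K+1), ‖w j‖^2 * r^(2*j) := by
      have h1 : ∀ M ∈ range N, ‖p.coeff M‖^2 * r^(2*M) = ‖w M‖^2 * r^(2*M) := by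
        intro M _
        rw [hpcoeff]
      rw [Finset.sum_congr rfl h1]
      symm
      apply Finset.sum_subset
      · intro j hj
        exact Finset.mem_range.mpr (by have := Finset.mem_range.mp hj; omega)
      · intro M hMN hM
        have hKM : K < M := by
          by_contra hcon
          exact hM (Finset.mem_range.mpr (by omega))
        rw [hw M hKM]
        simp
    calc ∑ m ∈ E, ‖∑ j ∈ range (m+1), c j * w (m-j)‖^2 * r^(2*m)
        ≤ ∑ M ∈ range N, ‖q.coeff M‖^2 * r^(2*M) := hE
      _ ≤ (1 + ε T)^2 * ∑ M ∈ range N, ‖p.coeff M‖^2 * r^(2*M) := hsum_q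
      _ = (1 + ε T)^2 * ∑ j ∈ range (K+1), ‖w j‖^2 * r^(2*j) := by rw [hW]
  -- pass to the limit T → ∞
  have hlim : Filter.Tendsto (fun T => (1 + ε T)^2 * ∑ j ∈ range (K+1), ‖w j‖^2 * r^(2*j))
      Filter.atTop (nhds ((1 + 0)^2 * ∑ j ∈ range (K+1), ‖w j‖^2 * r^(2*j))) := by
    apply Filter.Tendsto.mul_const
    apply Filter.Tendsto.pow
    exact (tendsto_const_nhds.add hε0)
  have hev : ∀ᶠ T in Filter.atTop,
      ∑ m ∈ E, ‖∑ j ∈ range (m+1), c j * w (m-j)‖^2 * r^(2*m)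
        ≤ (1 + ε T)^2 * ∑ j ∈ range (K+1), ‖w j‖^2 * r^(2*j) := by
    rcases E.exists_le with ⟨T0, hT0⟩
    refine Filter.eventually_atTop.mpr ⟨T0 + 1, fun T hTT => key T fun m hm => ?_⟩
    have := hT0 m hm
    omega
  have := ge_of_tendsto hlim hev
  simpa using this

lemma masterB (c : ℕ → ℂ)
    (hc : ∀ t : ℂ, ‖t‖ < 1 → ∃ s, ‖s‖ ≤ 1 ∧ HasSum (fun m => c m * t ^ m) s)
    (w : ℕ → ℂ) (K : ℕ) (hw : ∀ j, K < j → w j = 0) (E : Finset ℕ) :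
    ∑ m ∈ E, ‖∑ j ∈ range (m+1), c j * w (m-j)‖^2
      ≤ ∑ j ∈ range (K+1), ‖w j‖^2 := by
  set F : ℝ → ℝ := fun r => ∑ m ∈ E, ‖∑ j ∈ range (m+1), c j * w (m-j)‖^2 * r^(2*m) with hF
  set G : ℝ → ℝ := fun r => ∑ j ∈ range (K+1), ‖w j‖^2 * r^(2*j) with hG
  have hFc : Continuous F := by
    apply continuous_finset_sum
    intro m _
    exact continuous_const.mul (continuous_pow _)
  have hGc : Continuous G := by
    apply continuous_finset_sum
    intro j _
    exact continuous_const.mul (continuous_pow _)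
  have hne : (nhdsWithin (1:ℝ) (Set.Ioo (0:ℝ) 1)).NeBot := by
    rw [← mem_closure_iff_nhdsWithin_neBot, closure_Ioo (by norm_num : (0:ℝ) ≠ 1)]
    exact Set.mem_Icc.mpr ⟨by norm_num, le_refl _⟩
  have hFt : Filter.Tendsto F (nhdsWithin (1:ℝ) (Set.Ioo (0:ℝ) 1)) (nhds (F 1)) :=
    (hFc.tendsto 1).mono_left nhdsWithin_le_nhds
  have hGt : Filter.Tendsto G (nhdsWithin (1:ℝ) (Set.Ioo (0:ℝ) 1)) (nhds (G 1)) :=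
    (hGc.tendsto 1).mono_left nhdsWithin_le_nhds
  have hle : F 1 ≤ G 1 := by
    apply le_of_tendsto_of_tendsto hFt hGt
    filter_upwards [self_mem_nhdsWithin] with r hr
    exact master c hc w K hw E r hr.1 hr.2
  have h1 : F 1 = ∑ m ∈ E, ‖∑ j ∈ range (m+1), c j * w (m-j)‖^2 := by
    rw [hF]; simp
  have h2 : G 1 = ∑ j ∈ range (K+1), ‖w j‖^2 := by
    rw [hG]; simp
  rwa [h1, h2] at hle

lemma carlson1 (c : ℕ → ℂ)
    (hc : ∀ t : ℂ, ‖t‖ < 1 → ∃ s, ‖s‖ ≤ 1 ∧ HasSum (fun m => c m * t ^ m) s)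
    (k : ℕ) :
    ∑ m ∈ range (k+1), ‖c m‖^2 + ‖c (2*k+1)‖ ≤ 1 := by
  set x : ℝ := ‖c (2*k+1)‖ with hx
  set P : ℝ := ∑ m ∈ range (k+1), ‖c m‖^2 with hP
  have hPnn : 0 ≤ P := Finset.sum_nonneg fun m _ => by positivity
  have hxnn : 0 ≤ x := norm_nonneg _
  set θ : ℂ := if c (2*k+1) = 0 then 1 else c (2*k+1) / (x:ℂ) with hθdef
  have hθ : ‖θ‖ = 1 := by
    rw [hθdef]
    split_ifs with h
    · simp
    · rw [norm_div, Complex.norm_real, Real.norm_eq_abs, abs_of_pos (by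
        rw [hx]; exact norm_pos_iff.mpr h)]
      rw [← hx, div_self (by rw [hx]; exact (norm_pos_iff.mpr h).ne')]
  have hθx : c (2*k+1) = θ * (x:ℂ) := by
    rw [hθdef]
    split_ifs with h
    · simp [h, hx]
    · rw [div_mul_cancel₀]
      exact_mod_cast (norm_pos_iff.mpr h).ne'
  set w : ℕ → ℂ := fun j => if j = 0 then 1
    else if k+1 ≤ j ∧ j ≤ 2*k+1 then θ * conj (c (2*k+1-j)) else 0 with hwdef
  have hw : ∀ j, 2*k+1 < j → w j = 0 := by
    intro j hj
    rw [hwdef]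
    simp only
    rw [if_neg (by omega), if_neg (by omega)]
  have hw0 : w 0 = 1 := by rw [hwdef]; simp
  set E : Finset ℕ := insert (2*k+1) (range (k+1)) with hE
  have hnotmem : 2*k+1 ∉ range (k+1) := by simp; omega
  have hB := masterB c hc w (2*k+1) hw E
  -- low coefficients
  have hdlow : ∀ m ∈ range (k+1), (∑ j ∈ range (m+1), c j * w (m-j)) = c m := by
    intro m hm
    have hmk : m ≤ k := by have := Finset.mem_range.mp hm; omega
    rw [Finset.sum_eq_single m]
    · have : m - m = 0 := by omega
      rw [this, hw0, mul_one]
    · intro j hj hne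
      have hjm : j < m := by have := Finset.mem_range.mp hj; omega
      have h1 : m - j ≠ 0 := by omega
      have h2 : ¬ (k+1 ≤ m - j ∧ m - j ≤ 2*k+1) := by omega
      rw [hwdef]
      simp only
      rw [if_neg h1, if_neg h2, mul_zero]
    · intro h
      exact absurd (Finset.mem_range.mpr (by omega)) h
  -- top coefficient
  have hdtop : (∑ j ∈ range (2*k+1+1), c j * w (2*k+1-j)) = θ * ((x + P : ℝ) : ℂ) := by
    have hsplit : range (2*k+1+1) = Finset.Ico 0 (k+1) ∪ Finset.Ico (k+1) (2*k+1+1) := by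
      rw [Finset.range_eq_Ico]
      exact (Finset.Ico_union_Ico_eq_Ico (Nat.zero_le _) (by omega)).symm
    rw [hsplit, Finset.sum_union (Finset.Ico_disjoint_Ico_consecutive _ _ _)]
    have h1 : ∑ j ∈ Finset.Ico 0 (k+1), c j * w (2*k+1-j)
        = θ * ((P:ℝ):ℂ) := by
      rw [← Finset.range_eq_Ico]
      have : ∀ j ∈ range (k+1), c j * w (2*k+1-j) = θ * ((‖c j‖^2 : ℝ) : ℂ) := by
        intro j hj
        have hjk : j ≤ k := by have := Finset.mem_range.mp hj; omega
        have h0 : 2*k+1-j ≠ 0 := by omega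
        have hcc : k+1 ≤ 2*k+1-j ∧ 2*k+1-j ≤ 2*k+1 := by omega
        have hback : 2*k+1-(2*k+1-j) = j := by omega
        rw [hwdef]
        simp only
        rw [if_neg h0, if_pos hcc, hback]
        rw [show (((‖c j‖:ℝ)^2 : ℝ) : ℂ) = c j * conj (c j) from by
          rw [← Complex.normSq_eq_norm_sq, Complex.mul_conj]]
        ring
      rw [Finset.sum_congr rfl this, ← Finset.mul_sum]
      congr 1
      rw [hP]
      push_cast
      rfl
    have h2 : ∑ j ∈ Finset.Ico (k+1) (2*k+1+1), c j * w (2*k+1-j) = θ * ((x:ℝ):ℂ) := by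
      rw [Finset.sum_eq_single (2*k+1)]
      · have : 2*k+1-(2*k+1) = 0 := by omega
        rw [this, hw0, mul_one, hθx]
      · intro j hj hne
        have hjj := Finset.mem_Ico.mp hj
        have h0 : 2*k+1-j ≠ 0 := by omega
        have hcc : ¬ (k+1 ≤ 2*k+1-j ∧ 2*k+1-j ≤ 2*k+1) := by omega
        rw [hwdef]
        simp only
        rw [if_neg h0, if_neg hcc, mul_zero]
      · intro h
        exact absurd (Finset.mem_Ico.mpr (by omega)) h
    rw [h1, h2, ← mul_add]
    congr 1
    push_cast
    ring
  -- RHS of masterB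
  have hRHS : ∑ j ∈ range (2*k+1+1), ‖w j‖^2 = 1 + P := by
    have hsplit : range (2*k+1+1) = Finset.Ico 0 (k+1) ∪ Finset.Ico (k+1) (2*k+1+1) := by
      rw [Finset.range_eq_Ico]
      exact (Finset.Ico_union_Ico_eq_Ico (Nat.zero_le _) (by omega)).symm
    rw [hsplit, Finset.sum_union (Finset.Ico_disjoint_Ico_consecutive _ _ _)]
    have h1 : ∑ j ∈ Finset.Ico 0 (k+1), ‖w j‖^2 = 1 := by
      rw [Finset.sum_eq_single 0]
      · rw [hw0]; simp
      · intro j hj hne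
        have := Finset.mem_Ico.mp hj
        rw [hwdef]
        simp only
        rw [if_neg hne, if_neg (by omega)]
        simp
      · intro h
        exact absurd (Finset.mem_Ico.mpr (by omega)) h
    have h2 : ∑ j ∈ Finset.Ico (k+1) (2*k+1+1), ‖w j‖^2 = P := by
      rw [Finset.sum_Ico_eq_sum_range]
      have heq : ∀ i ∈ range (2*k+1+1-(k+1)), ‖w (k+1+i)‖^2 = ‖c (k-i)‖^2 := by
        intro i hi
        have hik : i ≤ k := by have := Finset.mem_range.mp hi; omega
        have h0 : k+1+i ≠ 0 := by omega
        have hcc : k+1 ≤ k+1+i ∧ k+1+i ≤ 2*k+1 := by omega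
        have hidx : 2*k+1-(k+1+i) = k-i := by omega
        rw [hwdef]
        simp only
        rw [if_neg h0, if_pos hcc, hidx, norm_mul, hθ, one_mul, RCLike.norm_conj]
      rw [Finset.sum_congr rfl heq]
      have hcount : 2*k+1+1-(k+1) = k+1 := by omega
      rw [hcount, hP]
      exact Finset.sum_range_reflect (fun m => ‖c m‖^2) (k+1)
    rw [h1, h2]
  -- assemble
  rw [hE, Finset.sum_insert hnotmem, hRHS] at hB
  have hBl : ‖θ * ((x + P : ℝ) : ℂ)‖^2 + ∑ m ∈ range (k+1), ‖c m‖^2 ≤ 1 + P := by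
    rw [← hdtop]
    have hcongr : ∑ m ∈ range (k+1), ‖∑ j ∈ range (m+1), c j * w (m-j)‖^2
        = ∑ m ∈ range (k+1), ‖c m‖^2 :=
      Finset.sum_congr rfl (fun m hm => by rw [hdlow m hm])
    rw [hcongr] at hB
    exact hB
  have hnorm : ‖θ * ((x + P : ℝ) : ℂ)‖ = x + P := by
    rw [norm_mul, hθ, one_mul, Complex.norm_real, Real.norm_eq_abs,
      _root_.abs_of_nonneg (by linarith : (0:ℝ) ≤ x + P)]
  rw [hnorm, ← hP] at hBl
  nlinarith [hBl]

lemma carlson2 (c : ℕ → ℂ)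
    (hc : ∀ t : ℂ, ‖t‖ < 1 → ∃ s, ‖s‖ ≤ 1 ∧ HasSum (fun m => c m * t ^ m) s)
    (k : ℕ) (hk : 1 ≤ k) :
    ∑ m ∈ range k, ‖c m‖^2 + ‖c k‖^2/(1+‖c 0‖) + ‖c (2*k)‖ ≤ 1 := by
  set s : ℝ := ‖c 0‖ with hs
  set A : ℝ := ‖c k‖ with hA
  set x : ℝ := ‖c (2*k)‖ with hx
  set P : ℝ := ∑ m ∈ range k, ‖c m‖^2 with hP
  have hPnn : 0 ≤ P := Finset.sum_nonneg fun m _ => by positivity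
  have hxnn : 0 ≤ x := norm_nonneg _
  have hsnn : 0 ≤ s := norm_nonneg _
  have hAnn : 0 ≤ A := norm_nonneg _
  have hspos : (0:ℝ) < 1 + s := by linarith
  set θ : ℂ := if c (2*k) = 0 then 1 else c (2*k) / (x:ℂ) with hθdef
  have hθ : ‖θ‖ = 1 := by
    rw [hθdef]
    split_ifs with h
    · simp
    · rw [norm_div, Complex.norm_real, Real.norm_eq_abs, _root_.abs_of_pos (by
        rw [hx]; exact norm_pos_iff.mpr h)]
      rw [← hx, div_self (by rw [hx]; exact (norm_pos_iff.mpr h).ne')]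
  clear_value s A x P
  have hθx : c (2*k) = θ * (x:ℂ) := by
    rw [hθdef]
    split_ifs with h
    · simp [h, hx]
    · rw [div_mul_cancel₀]
      rw [hx]
      exact_mod_cast (norm_pos_iff.mpr h).ne'
  set w : ℕ → ℂ := fun j => if j = 0 then 1
    else if j = k then θ * conj (c k) * (((1/(1+s)):ℝ):ℂ)
    else if k+1 ≤ j ∧ j ≤ 2*k then θ * conj (c (2*k-j)) else 0 with hwdef
  have hw0 : w 0 = 1 := by rw [hwdef]; simp
  have hwk : w k = θ * conj (c k) * (((1/(1+s)):ℝ):ℂ) := by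
    rw [hwdef]
    simp only
    rw [if_neg (by omega : ¬ (k = 0))]
    simp
  have hw : ∀ j, 2*k < j → w j = 0 := by
    intro j hj
    rw [hwdef]
    simp only
    rw [if_neg (by omega), if_neg (by omega), if_neg (by omega)]
  set E : Finset ℕ := insert (2*k) (range (k+1)) with hE
  have hnotmem : 2*k ∉ range (k+1) := by simp; omega
  have hB := masterB c hc w (2*k) hw E
  -- low coefficients m < k
  have hdlow : ∀ m ∈ range k, (∑ j ∈ range (m+1), c j * w (m-j)) = c m := by
    intro m hm
    have hmk : m < k := Finset.mem_range.mp hm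
    rw [Finset.sum_eq_single m]
    · have : m - m = 0 := by omega
      rw [this, hw0, mul_one]
    · intro j hj hne
      have hjm : j < m := by have := Finset.mem_range.mp hj; omega
      rw [hwdef]
      simp only
      rw [if_neg (by omega), if_neg (by omega), if_neg (by omega), mul_zero]
    · intro h
      exact absurd (Finset.mem_range.mpr (by omega)) h
  -- coefficient at k
  have hdk : (∑ j ∈ range (k+1), c j * w (k-j)) = c k + c 0 * w k := by
    have h1 : ∀ j ∈ range (k+1), j ≠ 0 → j ≠ k → c j * w (k-j) = 0 := by
      intro j hj h0 hkk
      have hjk : j < k := by have := Finset.mem_range.mp hj; omega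
      rw [hwdef]
      simp only
      rw [if_neg (by omega), if_neg (by omega), if_neg (by omega), mul_zero]
    rw [← Finset.add_sum_erase _ _ (Finset.mem_range.mpr (by omega : k < k+1))]
    have hksub : k - k = 0 := by omega
    rw [hksub, hw0, mul_one]
    congr 1
    rw [Finset.sum_eq_single 0]
    · have : k - 0 = k := by omega
      rw [this]
    · intro j hj hne
      have hj2 := Finset.mem_erase.mp hj
      exact h1 j hj2.2 hne hj2.1
    · intro h
      exact absurd (Finset.mem_erase.mpr ⟨by omega, Finset.mem_range.mpr (by omega)⟩) h
  -- top coefficient at 2k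
  have hdtop : (∑ j ∈ range (2*k+1), c j * w (2*k-j))
      = θ * ((x + (A^2/(1+s) + P) : ℝ) : ℂ) := by
    have hsplit : range (2*k+1) = Finset.Ico 0 k ∪ Finset.Ico k (2*k+1) := by
      rw [Finset.range_eq_Ico]
      exact (Finset.Ico_union_Ico_eq_Ico (Nat.zero_le _) (by omega)).symm
    rw [hsplit, Finset.sum_union (Finset.Ico_disjoint_Ico_consecutive _ _ _)]
    have h1 : ∑ j ∈ Finset.Ico 0 k, c j * w (2*k-j) = θ * ((P:ℝ):ℂ) := by
      rw [← Finset.range_eq_Ico]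
      have heq : ∀ j ∈ range k, c j * w (2*k-j) = θ * ((‖c j‖^2 : ℝ) : ℂ) := by
        intro j hj
        have hjk : j < k := Finset.mem_range.mp hj
        have hback : 2*k-(2*k-j) = j := by omega
        rw [hwdef]
        simp only
        rw [if_neg (by omega), if_neg (by omega), if_pos (by omega : k+1 ≤ 2*k-j ∧ 2*k-j ≤ 2*k), hback]
        rw [show (((‖c j‖:ℝ)^2 : ℝ) : ℂ) = c j * conj (c j) from by
          rw [← Complex.normSq_eq_norm_sq, Complex.mul_conj]]
        ring
      rw [Finset.sum_congr rfl heq, ← Finset.mul_sum]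
      congr 1
      rw [hP]
      push_cast
      rfl
    have h2 : ∑ j ∈ Finset.Ico k (2*k+1), c j * w (2*k-j)
        = θ * ((A^2/(1+s) : ℝ):ℂ) + θ * ((x:ℝ):ℂ) := by
      have hka : Finset.Ico k (2*k+1) = Finset.Ico k (k+1) ∪ Finset.Ico (k+1) (2*k+1) :=
        (Finset.Ico_union_Ico_eq_Ico (by omega) (by omega)).symm
      rw [hka, Finset.sum_union (Finset.Ico_disjoint_Ico_consecutive _ _ _)]
      congr 1
      · rw [Nat.Ico_succ_singleton, Finset.sum_singleton,
          show 2*k-k = k from by omega, hwk]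
        have habs : ((A^2 : ℝ) : ℂ) = c k * conj (c k) := by
          rw [hA, Complex.mul_conj, Complex.normSq_eq_norm_sq]
        rw [show ((A^2/(1+s) : ℝ):ℂ) = ((A^2:ℝ):ℂ) * ((1/(1+s):ℝ):ℂ) from by push_cast; ring,
          habs]
        ring
      · rw [Finset.sum_eq_single (2*k)]
        · have : 2*k-(2*k) = 0 := by omega
          rw [this, hw0, mul_one, hθx]
        · intro j hj hne
          have hjj := Finset.mem_Ico.mp hj
          rw [hwdef]
          simp only
          rw [if_neg (by omega), if_neg (by omega), if_neg (by omega), mul_zero]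
        · intro h
          exact absurd (Finset.mem_Ico.mpr (by omega)) h
    rw [h1, h2]
    push_cast
    ring
  -- RHS of masterB
  have hRHS : ∑ j ∈ range (2*k+1), ‖w j‖^2 = 1 + (A/(1+s))^2 + P := by
    have hsplit : range (2*k+1) = Finset.Ico 0 k ∪ Finset.Ico k (2*k+1) := by
      rw [Finset.range_eq_Ico]
      exact (Finset.Ico_union_Ico_eq_Ico (Nat.zero_le _) (by omega)).symm
    rw [hsplit, Finset.sum_union (Finset.Ico_disjoint_Ico_consecutive _ _ _)]
    have h1 : ∑ j ∈ Finset.Ico 0 k, ‖w j‖^2 = 1 := by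
      rw [Finset.sum_eq_single 0]
      · rw [hw0]; simp
      · intro j hj hne
        have := Finset.mem_Ico.mp hj
        rw [hwdef]
        simp only
        rw [if_neg hne, if_neg (by omega), if_neg (by omega)]
        simp
      · intro h
        exact absurd (Finset.mem_Ico.mpr (by omega)) h
    have h2 : ∑ j ∈ Finset.Ico k (2*k+1), ‖w j‖^2 = (A/(1+s))^2 + P := by
      have hka : Finset.Ico k (2*k+1) = Finset.Ico k (k+1) ∪ Finset.Ico (k+1) (2*k+1) :=
        (Finset.Ico_union_Ico_eq_Ico (by omega) (by omega)).symm
      rw [hka, Finset.sum_union (Finset.Ico_disjoint_Ico_consecutive _ _ _)]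
      congr 1
      · rw [Nat.Ico_succ_singleton, Finset.sum_singleton, hwk]
        rw [norm_mul, norm_mul, hθ, one_mul, RCLike.norm_conj, Complex.norm_real,
          Real.norm_eq_abs, _root_.abs_of_pos (by positivity), ← hA]
        ring
      · rw [Finset.sum_Ico_eq_sum_range]
        have heq : ∀ i ∈ range (2*k+1-(k+1)), ‖w (k+1+i)‖^2 = ‖c (k-1-i)‖^2 := by
          intro i hi
          have hik : i < k := by have := Finset.mem_range.mp hi; omega
          have hidx : 2*k-(k+1+i) = k-1-i := by omega
          rw [hwdef]
          simp only
          rw [if_neg (by omega), if_neg (by omega), if_pos (by omega : k+1 ≤ k+1+i ∧ k+1+i ≤ 2*k), hidx,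
            norm_mul, hθ, one_mul, RCLike.norm_conj]
        rw [Finset.sum_congr rfl heq]
        have hcount : 2*k+1-(k+1) = k := by omega
        rw [hcount, hP]
        exact Finset.sum_range_reflect (fun m => ‖c m‖^2) k
    rw [h1, h2]
    ring
  -- assemble
  rw [hE, Finset.sum_insert hnotmem, hRHS] at hB
  have hsplitE : ∑ m ∈ range (k+1), ‖∑ j ∈ range (m+1), c j * w (m-j)‖^2
      = P + ‖c k + c 0 * w k‖^2 := by
    rw [Finset.sum_range_succ, hdk]
    have hcongr : ∑ m ∈ range k, ‖∑ j ∈ range (m+1), c j * w (m-j)‖^2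
        = ∑ m ∈ range k, ‖c m‖^2 :=
      Finset.sum_congr rfl (fun m hm => by rw [hdlow m hm])
    rw [hcongr, ← hP]
  rw [hsplitE, hdtop] at hB
  have hnormtop : ‖θ * ((x + (A^2/(1+s) + P) : ℝ) : ℂ)‖ = x + (A^2/(1+s) + P) := by
    rw [norm_mul, hθ, one_mul, Complex.norm_real, Real.norm_eq_abs,
      _root_.abs_of_nonneg (by positivity)]
  rw [hnormtop] at hB
  -- lower bound for the middle term
  have hwknorm : ‖c 0 * w k‖ = s * (A/(1+s)) := by
    rw [hwk, norm_mul, norm_mul, norm_mul, hθ, one_mul, RCLike.norm_conj,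
      Complex.norm_real, Real.norm_eq_abs, _root_.abs_of_pos (by positivity)]
    rw [← hs, ← hA]
    ring
  have hdklb : A/(1+s) ≤ ‖c k + c 0 * w k‖ := by
    have hy := norm_sub_le (c k + c 0 * w k) (c 0 * w k)
    have h0 : (c k + c 0 * w k) - (c 0 * w k) = c k := by ring
    rw [h0, hwknorm, ← hA] at hy
    have heq : A - s * (A/(1+s)) = A/(1+s) := by
      rw [eq_div_iff hspos.ne']
      field_simp
      ring
    linarith
  set D : ℝ := ‖c k + c 0 * w k‖ with hD
  have hDnn : 0 ≤ D := norm_nonneg _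
  clear_value D
  have hdklb2 : (A/(1+s))^2 ≤ D^2 :=
    pow_le_pow_left₀ (div_nonneg hAnn hspos.le) hdklb 2
  -- final algebra
  have hsq : (x + (A^2/(1+s) + P))^2 ≤ 1 := by nlinarith
  have hfin : x + (A^2/(1+s) + P) ≤ 1 := by nlinarith
  linarith

lemma range_succ_eq_Icc (g : ℕ → ℝ) (k : ℕ) :
    ∑ m ∈ range (k+1), g m = g 0 + ∑ i ∈ Finset.Icc 1 k, g i := by
  induction k with
  | zero => simp
  | succ k ih =>
      rw [Finset.sum_range_succ, ih, Finset.sum_Icc_succ_top (by omega : 1 ≤ k+1)]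
      ring

/-- **Carlson-type inequalities for homogeneous parts on the polydisk.**
For a holomorphic `f(z) = Σ_α a_α z^α` with `|f| ≤ 1` on `𝔻ⁿ` and homogeneous parts
`P_m(z) = Σ_{|α|=m} a_α z^α`, for every `z ∈ 𝔻ⁿ`:
`|a₀|² + |P₁(z)|² + ⋯ + |P_k(z)|² + |P_{2k+1}(z)| ≤ 1` for all `k ≥ 0`, and
`|a₀|² + |P₁(z)|² + ⋯ + |P_{k-1}(z)|² + |P_k(z)|²/(1+|a₀|) + |P_{2k}(z)| ≤ 1`
for all `k ≥ 1`. -/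
theorem carlson_homogeneous_polydisk
    (n : ℕ) (hn : 1 ≤ n)
    (f : (Fin n → ℂ) → ℂ) (a : (Fin n → ℕ) → ℂ)
    (hf : DifferentiableOn ℂ f {w : Fin n → ℂ | ∀ j, ‖w j‖ < 1})
    (hb : ∀ w : Fin n → ℂ, (∀ j, ‖w j‖ < 1) → ‖f w‖ ≤ 1)
    (hrep : ∀ w : Fin n → ℂ, (∀ j, ‖w j‖ < 1) →
      HasSum (fun α : Fin n → ℕ => a α * ∏ j, w j ^ α j) (f w))
    (P : ℕ → (Fin n → ℂ) → ℂ)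
    (hP : ∀ (m : ℕ) (w : Fin n → ℂ),
      P m w = ∑ α ∈ Finset.Nat.antidiagonalTuple n m, a α * ∏ j, w j ^ α j) :
    ∀ z : Fin n → ℂ, (∀ j, ‖z j‖ < 1) →
      (∀ k : ℕ,
        ‖a 0‖ ^ 2 + (∑ i ∈ Finset.Icc 1 k, ‖P i z‖ ^ 2) + ‖P (2 * k + 1) z‖ ≤ 1)
      ∧ (∀ k : ℕ, 1 ≤ k →
        ‖a 0‖ ^ 2 + (∑ i ∈ Finset.Icc 1 (k - 1), ‖P i z‖ ^ 2)
          + ‖P k z‖ ^ 2 / (1 + ‖a 0‖) + ‖P (2 * k) z‖ ≤ 1) := by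

  intro z hz
  have hP0 : P 0 z = a 0 := by
    rw [hP, Finset.Nat.antidiagonalTuple_zero_right, Finset.sum_singleton]
    simp
  set c : ℕ → ℂ := fun m => P m z with hcdef
  have hc : ∀ t : ℂ, ‖t‖ < 1 → ∃ s, ‖s‖ ≤ 1 ∧ HasSum (fun m => c m * t ^ m) s := by
    intro t ht
    set wv : Fin n → ℂ := fun j => t * z j with hwv
    have hwv1 : ∀ j, ‖wv j‖ < 1 := by
      intro j
      rw [hwv]
      calc ‖t * z j‖ = ‖t‖ * ‖z j‖ := norm_mul _ _
        _ ≤ ‖t‖ * 1 := mul_le_mul_of_nonneg_left (hz j).le (norm_nonneg _)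
        _ < 1 := by rw [mul_one]; exact ht
    refine ⟨f wv, hb wv hwv1, ?_⟩
    have h0 := hrep wv hwv1
    have hterm : (fun α : Fin n → ℕ => a α * ∏ j, wv j ^ α j)
        = fun α => (a α * ∏ j, z j ^ α j) * t ^ (∑ j, α j) := by
      funext α
      rw [hwv]
      simp only [mul_pow, Finset.prod_mul_distrib, Finset.prod_pow_eq_pow_sum]
      ring
    rw [hterm] at h0
    let e : (Σ m : ℕ, {x : Fin n → ℕ // x ∈ Finset.Nat.antidiagonalTuple n m})
        ≃ (Fin n → ℕ) :=
      { toFun := fun p => p.2.1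
        invFun := fun α => ⟨∑ j, α j, ⟨α, Finset.Nat.mem_antidiagonalTuple.mpr rfl⟩⟩
        left_inv := by
          rintro ⟨m, α, hα⟩
          have hm : ∑ j, α j = m := Finset.Nat.mem_antidiagonalTuple.mp hα
          subst hm
          rfl
        right_inv := fun α => rfl }
    have h1 : HasSum ((fun α : Fin n → ℕ => (a α * ∏ j, z j ^ α j) * t ^ (∑ j, α j)) ∘ e)
        (f wv) := (e.hasSum_iff).mpr h0
    apply HasSum.sigma h1
    intro m
    have h2 := hasSum_fintype (fun x : {x : Fin n → ℕ // x ∈ Finset.Nat.antidiagonalTuple n m} =>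
      (a x.1 * ∏ j, z j ^ x.1 j) * t ^ (∑ j, x.1 j))
    have h3 : ∑ x : {x : Fin n → ℕ // x ∈ Finset.Nat.antidiagonalTuple n m},
        (a x.1 * ∏ j, z j ^ x.1 j) * t ^ (∑ j, x.1 j) = c m * t ^ m := by
      rw [Finset.sum_coe_sort _ (fun α => (a α * ∏ j, z j ^ α j) * t ^ (∑ j, α j))]
      have h4 : ∀ α ∈ Finset.Nat.antidiagonalTuple n m,
          (a α * ∏ j, z j ^ α j) * t ^ (∑ j, α j) = (a α * ∏ j, z j ^ α j) * t ^ m := by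
        intro α hα
        rw [Finset.Nat.mem_antidiagonalTuple.mp hα]
      rw [Finset.sum_congr rfl h4, ← Finset.sum_mul, hcdef]
      simp only
      rw [hP]
    rw [← h3]
    exact h2
  constructor
  · intro k
    have h := carlson1 c hc k
    rw [range_succ_eq_Icc (fun m => ‖c m‖^2) k] at h
    simp only [hcdef] at h
    rw [hP0] at h
    exact h
  · intro k hk
    have h := carlson2 c hc k hk
    have hkk : range k = range ((k-1)+1) := by congr 1; omega
    rw [hkk, range_succ_eq_Icc (fun m => ‖c m‖^2) (k-1)] at h
    simp only [hcdef] at h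
    rw [hP0] at h
    exact h
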